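/- Let H be a connected graph of order n₁ and let G = H ∘ K₁ be the corona of H with K₁ (obtained by attaching one pendant vertex to each vertex of H). Then for α ∈ [0,1], the characteristic polynomial of A_α(G) equals ∏_{i=1}^{n₁} (x² − (2α + μ_i)x + α(μ_i + 2) − 1), where μ_1, …, μ_{n₁} are the eigenvalues of A_α(H). -/

import Mathlib

/-- The `A_α`-matrix of a graph: `α·D(G) + (1-α)·A(G)`. -/
noncomputable def Aalpha {V : Type*} [Fintype V] [DecidableEq V]
    (α : ℝ) (G : SimpleGraph V) [DecidableRel G.Adj] : Matrix V V ℝ :=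
  α • Matrix.diagonal (fun v => (G.degree v : ℝ)) + (1 - α) • G.adjMatrix ℝ

lemma Aalpha_isHermitian {V : Type*} [Fintype V] [DecidableEq V]
    (α : ℝ) (G : SimpleGraph V) [DecidableRel G.Adj] : (Aalpha α G).IsHermitian := by
  apply Matrix.IsHermitian.ext
  intro i j
  by_cases h : G.Adj i j <;> by_cases hij : i = j <;>
    simp_all [Aalpha, Matrix.diagonal_apply, SimpleGraph.adj_comm, eq_comm]

/-- The corona `H ∘ K₁`: one new pendant vertex `inr v` attached to each vertex `inl v`
of `H`. -/
def corona {m : ℕ} (H : SimpleGraph (Fin m)) : SimpleGraph (Fin m ⊕ Fin m) where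
  Adj x y :=
    match x, y with
    | Sum.inl u, Sum.inl v => H.Adj u v
    | Sum.inl u, Sum.inr v => u = v
    | Sum.inr u, Sum.inl v => v = u
    | Sum.inr _, Sum.inr _ => False
  symm := ⟨by rintro (u | u) (v | v) h <;> simp_all [SimpleGraph.adj_comm]⟩
  loopless := ⟨by rintro (u | u) h <;> simp_all⟩

instance coronaDecidable {m : ℕ} (H : SimpleGraph (Fin m)) [DecidableRel H.Adj] :
    DecidableRel (corona H).Adj := fun x y =>
  match x, y with
  | Sum.inl u, Sum.inl v => inferInstanceAs (Decidable (H.Adj u v))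
  | Sum.inl u, Sum.inr v => inferInstanceAs (Decidable (u = v))
  | Sum.inr u, Sum.inl v => inferInstanceAs (Decidable (v = u))
  | Sum.inr _, Sum.inr _ => inferInstanceAs (Decidable False)

open Matrix Polynomial

section Aux

variable {n R : Type*} [Fintype n] [DecidableEq n] [CommRing R]

/-- charpoly is invariant under conjugation by a matrix with two-sided inverse. -/
lemma charpoly_conj_aux (W B V : Matrix n n R) (h1 : W * V = 1) :
    (W * B * V).charpoly = B.charpoly := by
  have hmap : ∀ (P Q : Matrix n n R), (P * Q).map (C : R →+* R[X]) = P.map C * Q.map C := by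
    intro P Q
    exact Matrix.map_mul
  have hWV : W.map (C : R →+* R[X]) * V.map C = 1 := by
    rw [← hmap, h1]; ext i j; simp [Matrix.one_apply, apply_ite]
  have key : charmatrix (W * B * V) = W.map C * charmatrix B * V.map C := by
    unfold charmatrix
    rw [mul_sub, sub_mul]
    congr 1
    · rw [scalar_apply, ← smul_one_eq_diagonal, mul_smul_comm, smul_mul_assoc, mul_one, hWV]
    · simp only [RingHom.mapMatrix_apply]
      rw [hmap, hmap, mul_assoc]
  have hdet : (W.map (C : R →+* R[X])).det * (V.map C).det = 1 := by
    rw [← det_mul, hWV, det_one]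
  rw [Matrix.charpoly, key, det_mul, det_mul, mul_comm, ← mul_assoc, mul_comm (V.map C).det,
    hdet, one_mul, Matrix.charpoly]

def sumProdEquiv (n : Type*) : n ⊕ n ≃ Fin 2 × n where
  toFun := Sum.elim (fun i => (0, i)) (fun i => (1, i))
  invFun p := if p.1 = 0 then Sum.inl p.2 else Sum.inr p.2
  left_inv := by rintro (i | i) <;> simp
  right_inv := by rintro ⟨x, i⟩; fin_cases x <;> simp

lemma det_fromBlocks_diagonal (a b c d : n → R) :
    (fromBlocks (diagonal a) (diagonal b) (diagonal c) (diagonal d)).det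
      = ∏ i, (a i * d i - b i * c i) := by
  have h : fromBlocks (diagonal a) (diagonal b) (diagonal c) (diagonal d)
      = (blockDiagonal (fun i => !![a i, b i; c i, d i])).submatrix
          (sumProdEquiv n) (sumProdEquiv n) := by
    ext x y
    rcases x with i | i <;> rcases y with j | j <;>
      · simp [sumProdEquiv, blockDiagonal_apply, diagonal_apply, eq_comm]
  rw [h, det_submatrix_equiv_self, det_blockDiagonal]
  simp [Matrix.det_fin_two]

lemma charmatrix_diagonal (f : n → R) :
    charmatrix (diagonal f) = diagonal (fun i => (X : R[X]) - C (f i)) := by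
  apply Matrix.ext
  intro i j
  by_cases h : i = j
  · subst h; simp
  · simp [charmatrix_apply_ne _ _ _ h, diagonal_apply_ne _ h]

end Aux

section Corona

variable {m : ℕ} (H : SimpleGraph (Fin m)) [DecidableRel H.Adj]

lemma corona_adj_ll (u v : Fin m) :
    (corona H).Adj (Sum.inl u) (Sum.inl v) ↔ H.Adj u v := Iff.rfl

lemma corona_adj_lr (u v : Fin m) :
    (corona H).Adj (Sum.inl u) (Sum.inr v) ↔ u = v := Iff.rfl

lemma corona_adj_rl (u v : Fin m) :
    (corona H).Adj (Sum.inr u) (Sum.inl v) ↔ v = u := Iff.rfl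

lemma corona_adj_rr (u v : Fin m) :
    (corona H).Adj (Sum.inr u) (Sum.inr v) ↔ False := Iff.rfl

lemma corona_degree_inl (v : Fin m) :
    (corona H).degree (Sum.inl v) = H.degree v + 1 := by
  have hnb : (corona H).neighborFinset (Sum.inl v) =
      insert (Sum.inr v) ((H.neighborFinset v).map ⟨Sum.inl, Sum.inl_injective⟩) := by
    ext x
    rcases x with u | u <;>
      simp [SimpleGraph.mem_neighborFinset, corona_adj_ll, corona_adj_lr, eq_comm]
  rw [SimpleGraph.degree, hnb, Finset.card_insert_of_notMem (by simp),
    Finset.card_map, SimpleGraph.degree]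

lemma corona_degree_inr (v : Fin m) :
    (corona H).degree (Sum.inr v) = 1 := by
  rw [SimpleGraph.degree]
  convert Finset.card_singleton (Sum.inl v : Fin m ⊕ Fin m)
  ext x
  rcases x with u | u <;>
    simp [SimpleGraph.mem_neighborFinset, corona_adj_rl, corona_adj_rr, eq_comm]

lemma Aalpha_corona_eq_fromBlocks (α : ℝ) :
    Aalpha α (corona H) =
      fromBlocks (Aalpha α H + α • 1) ((1 - α) • 1) ((1 - α) • 1) (α • 1) := by
  ext x y
  rcases x with i | i <;> rcases y with j | j
  · by_cases h : i = j
    · subst h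
      simp [Aalpha, fromBlocks, corona_degree_inl, corona_adj_ll, Matrix.one_apply]
      push_cast
      ring
    · simp [Aalpha, fromBlocks, corona_adj_ll, Matrix.one_apply, h, diagonal_apply,
        Sum.inl.injEq]
  · by_cases h : i = j <;>
      simp [Aalpha, fromBlocks, corona_adj_lr, Matrix.one_apply, h, diagonal_apply]
  · by_cases h : i = j <;>
      simp [Aalpha, fromBlocks, corona_adj_rl, Matrix.one_apply, h, eq_comm, diagonal_apply]
  · by_cases h : i = j
    · subst h
      simp [Aalpha, fromBlocks, corona_degree_inr, corona_adj_rr, Matrix.one_apply]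
    · simp [Aalpha, fromBlocks, corona_adj_rr, Matrix.one_apply, h, diagonal_apply,
        Sum.inr.injEq]

end Corona

open Polynomial in
/-- The characteristic polynomial of `A_α(H ∘ K₁)` equals
`∏_{i=1}^{n₁} (x² − (2α + μ_i)x + α(μ_i + 2) − 1)` where the `μ_i` are the
eigenvalues of `A_α(H)`. -/
theorem Aalpha_corona_charpoly (n₁ : ℕ) (H : SimpleGraph (Fin n₁)) [DecidableRel H.Adj]
    (hconn : H.Connected) (α : ℝ) (hα0 : 0 ≤ α) (hα1 : α ≤ 1) :
    (Aalpha α (corona H)).charpoly =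
      ∏ i : Fin n₁,
        (X ^ 2 - C (2 * α + (Aalpha_isHermitian α H).eigenvalues i) * X +
          C (α * ((Aalpha_isHermitian α H).eigenvalues i + 2) - 1)) := by
  classical
  have hM := Aalpha_isHermitian α H
  set μ : Fin n₁ → ℝ := hM.eigenvalues with hμ
  set U : Matrix (Fin n₁) (Fin n₁) ℝ := (hM.eigenvectorUnitary : Matrix (Fin n₁) (Fin n₁) ℝ)
    with hUdef
  have hU1 : U * star U = 1 := (Matrix.mem_unitaryGroup_iff).mp hM.eigenvectorUnitary.2
  have hspec : Aalpha α H = U * diagonal μ * star U := by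
    have h := hM.spectral_theorem
    simpa [RCLike.ofReal_real_eq_id] using h
  set W : Matrix (Fin n₁ ⊕ Fin n₁) (Fin n₁ ⊕ Fin n₁) ℝ := fromBlocks U 0 0 U with hWdef
  have hstarW : star W = fromBlocks (star U) 0 0 (star U) := by
    rw [hWdef, Matrix.star_eq_conjTranspose, fromBlocks_conjTranspose]
    simp [Matrix.star_eq_conjTranspose]
  have hW1 : W * star W = 1 := by
    rw [hstarW, hWdef, fromBlocks_multiply]
    simp [hU1, fromBlocks_one]
  set N : Matrix (Fin n₁ ⊕ Fin n₁) (Fin n₁ ⊕ Fin n₁) ℝ :=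
    fromBlocks (diagonal (fun i => μ i + α)) (diagonal (fun _ => 1 - α))
      (diagonal (fun _ => 1 - α)) (diagonal (fun _ => α)) with hNdef
  have hkey : Aalpha α (corona H) = W * N * star W := by
    rw [Aalpha_corona_eq_fromBlocks, hstarW, hNdef, hWdef, fromBlocks_multiply,
      fromBlocks_multiply]
    have hd1 : U * diagonal (fun i => μ i + α) * star U = Aalpha α H + α • 1 := by
      have : (diagonal (fun i => μ i + α) : Matrix (Fin n₁) (Fin n₁) ℝ)
          = diagonal μ + α • 1 := by
        rw [smul_one_eq_diagonal, ← diagonal_add]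
      rw [this, mul_add, add_mul, mul_smul_comm, smul_mul_assoc, mul_one, hU1, hspec]
    have hd2 : U * diagonal (fun _ : Fin n₁ => (1 - α : ℝ)) * star U = (1 - α) • 1 := by
      rw [← smul_one_eq_diagonal, mul_smul_comm, smul_mul_assoc, mul_one, hU1]
    have hd3 : U * diagonal (fun _ : Fin n₁ => (α : ℝ)) * star U = α • 1 := by
      rw [← smul_one_eq_diagonal, mul_smul_comm, smul_mul_assoc, mul_one, hU1]
    simp only [Matrix.mul_zero, Matrix.zero_mul, add_zero, zero_add, Matrix.mul_assoc] at *
    rw [← hd1, ← hd2, ← hd3]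
  rw [hkey, charpoly_conj_aux _ _ _ hW1, hNdef, Matrix.charpoly, charmatrix_fromBlocks,
    _root_.charmatrix_diagonal, _root_.charmatrix_diagonal]
  have hmapd : ∀ r : ℝ, ((diagonal (fun _ : Fin n₁ => r)).map (C : ℝ →+* ℝ[X]) : _)
      = diagonal (fun _ : Fin n₁ => C r) := by
    intro r
    rw [diagonal_map (map_zero _)]
  rw [hmapd, diagonal_neg, det_fromBlocks_diagonal]
  refine Finset.prod_congr rfl fun i _ => ?_
  simp only [map_sub, map_add, _root_.map_mul, _root_.map_one, map_ofNat]
  ring
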